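/- Let G = N ⋊ P be the semidirect product of a finite p'-group N by a finite p-group P. Then for every x ∈ P, the number λ_G(x) of Sylow p-subgroups of G containing x equals the index |C_N(x) : C_N(P)|. -/

import Mathlib

open SemidirectProduct Pointwise

section Aux

variable {p : ℕ} [hp : Fact p.Prime] {N P : Type} [Group N] [Group P]
  [Fintype N] [Fintype P] (φ : P →* MulAut N)

/-- The semidirect product of two fintypes is a fintype. -/
noncomputable instance : Fintype (N ⋊[φ] P) :=
  Fintype.ofEquiv (N × P)
    ⟨fun g => ⟨g.1, g.2⟩, fun g => (g.left, g.right), fun _ => rfl, fun _ => rfl⟩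

theorem aux_card_semidirect : Nat.card (N ⋊[φ] P) = Nat.card N * Nat.card P := by
  rw [← Nat.card_prod]
  exact Nat.card_congr
    ⟨fun g => (g.left, g.right), fun g => ⟨g.1, g.2⟩, fun _ => rfl, fun _ => rfl⟩

theorem aux_mem_range_inr_iff (g : N ⋊[φ] P) :
    g ∈ (inr : P →* N ⋊[φ] P).range ↔ g.left = 1 := by
  constructor
  · rintro ⟨y, rfl⟩; rfl
  · intro h; exact ⟨g.right, by ext <;> simp [h]⟩

theorem aux_commute_inl_inr_iff (n : N) (y : P) :
    Commute (inl n : N ⋊[φ] P) (inr y) ↔ φ y n = n := by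
  rw [Commute, SemiconjBy, SemidirectProduct.ext_iff]
  simp [mul_left, mul_right, eq_comm]

/-- The canonical copy of `P` is a Sylow `p`-subgroup of `N ⋊[φ] P`. -/
noncomputable def sylowBase (hP : IsPGroup p P) (hN : Nat.Coprime (Nat.card N) p) :
    Sylow p (N ⋊[φ] P) where
  toSubgroup := (inr : P →* N ⋊[φ] P).range
  isPGroup' := IsPGroup.of_surjective hP inr.rangeRestrict inr.rangeRestrict_surjective
  is_maximal' := by
    intro Q hQ hle
    obtain ⟨k, hk⟩ := IsPGroup.iff_card.mp hQ
    have h1 : Nat.card Q ∣ Nat.card N * Nat.card P := by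
      rw [← aux_card_semidirect φ]; exact Subgroup.card_subgroup_dvd_card Q
    have h2 : Nat.card Q ∣ Nat.card P := by
      refine Nat.Coprime.dvd_of_dvd_mul_left ?_ h1
      rw [hk]
      exact (Nat.coprime_comm.mp hN).pow_left k
    have hcardP₀ : Nat.card (inr : P →* N ⋊[φ] P).range = Nat.card P :=
      Nat.card_congr (Equiv.ofInjective _ inr_injective).symm
    refine (Subgroup.eq_of_le_of_card_ge hle ?_).symm
    rw [hcardP₀]
    exact Nat.le_of_dvd Nat.card_pos h2

theorem aux_inl_mem_normalizer_iff (n : N) :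
    (inl n : N ⋊[φ] P) ∈ Subgroup.normalizer ((inr : P →* N ⋊[φ] P).range : Set (N ⋊[φ] P)) ↔ ∀ y, φ y n = n := by
  rw [Subgroup.mem_normalizer_iff]
  constructor
  · intro h y
    have h2 := (h (inr y)).mp ⟨y, rfl⟩
    rw [aux_mem_range_inr_iff] at h2
    simp only [mul_left, mul_right, inv_left, inv_right, left_inl, right_inl, left_inr,
      right_inr, inv_one, map_one, MulAut.one_apply, mul_one, one_mul, map_inv,
      mul_inv_eq_one] at h2
    exact h2.symm
  · intro hn g
    rw [aux_mem_range_inr_iff, aux_mem_range_inr_iff]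
    simp only [mul_left, mul_right, inv_left, inv_right, left_inl, right_inl, left_inr,
      right_inr, inv_one, map_one, MulAut.one_apply, mul_one, one_mul, map_inv, hn]
    constructor
    · intro h; rw [h]; simp [hn]
    · intro h
      have := congrArg (fun z => n⁻¹ * z * n) h
      simpa [mul_assoc, hn] using this

theorem aux_mem_smul_sylow {G : Type} [Group G] (Q : Sylow p G) (g a : G) :
    a ∈ g • Q ↔ g⁻¹ * a * g ∈ Q := by
  show a ∈ ((g • Q : Sylow p G) : Subgroup G) ↔ _
  rw [Sylow.coe_subgroup_smul, Subgroup.mem_pointwise_smul_iff_inv_smul_mem]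
  simp only [MulAut.smul_def, MulAut.conj_inv_apply]
  rfl

end Aux

/-- In `G = N ⋊ P` with `P` a finite `p`-group and `N` a finite `p'`-group, for every
`x ∈ P` the number of Sylow `p`-subgroups of `G` containing `x` equals the index
`|C_N(x) : C_N(P)|`; stated multiplicatively as `λ_G(x) · |C_N(P)| = |C_N(x)|`. -/
theorem lambda_eq_index_of_semidirect (p : ℕ) [Fact p.Prime] (N P : Type)
    [Group N] [Group P] [Fintype N] [Fintype P] (φ : P →* MulAut N)
    (hP : IsPGroup p P) (hN : Nat.Coprime (Nat.card N) p) (x : P) :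
    Nat.card {Q : Sylow p (N ⋊[φ] P) // (inr x : N ⋊[φ] P) ∈ Q} *
      Nat.card {n : N // ∀ y : P, Commute (inl n : N ⋊[φ] P) (inr y)} =
    Nat.card {n : N // Commute (inl n : N ⋊[φ] P) (inr x)} := by
  classical
  -- the two subgroups of `N`
  let A : Subgroup N :=
    { carrier := {n | φ x n = n}
      one_mem' := map_one _
      mul_mem' := fun {a b} ha hb => by
        simp only [Set.mem_setOf_eq, map_mul] at *
        rw [ha, hb]
      inv_mem' := fun {a} ha => by
        simp only [Set.mem_setOf_eq, map_inv] at *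
        rw [ha] }
  let B : Subgroup N :=
    { carrier := {n | ∀ y, φ y n = n}
      one_mem' := fun y => map_one _
      mul_mem' := fun {a b} ha hb y => by
        simp only [map_mul]
        rw [ha y, hb y]
      inv_mem' := fun {a} ha y => by
        simp only [map_inv]
        rw [ha y] }
  have hBA : B ≤ A := fun n hn => hn x
  let P₀ : Sylow p (N ⋊[φ] P) := sylowBase φ hP hN
  have hmem_smul : ∀ n : N, (inr x : N ⋊[φ] P) ∈ (inl n : N ⋊[φ] P) • P₀ ↔ n ∈ A := by
    intro n
    rw [aux_mem_smul_sylow]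
    show _ ∈ (inr : P →* N ⋊[φ] P).range ↔ _
    rw [aux_mem_range_inr_iff]
    simp only [mul_left, mul_right, inv_left, inv_right, left_inl, right_inl, left_inr,
      right_inr, inv_one, map_one, MulAut.one_apply, mul_one, one_mul, inv_mul_eq_one]
    exact eq_comm
  -- the map from `A` to the Sylow subgroups containing `inr x`
  let f : A → {Q : Sylow p (N ⋊[φ] P) // (inr x : N ⋊[φ] P) ∈ Q} :=
    fun n => ⟨(inl (n : N) : N ⋊[φ] P) • P₀, (hmem_smul n).mpr n.2⟩
  have key : ∀ a b : N, ((inl a : N ⋊[φ] P) • P₀ = (inl b : N ⋊[φ] P) • P₀) ↔ b⁻¹ * a ∈ B := by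
    intro a b
    rw [← inv_smul_eq_iff, smul_smul, ← map_inv, ← map_mul,
      Sylow.smul_eq_iff_mem_normalizer]
    exact aux_inl_mem_normalizer_iff φ _
  have hsurj : Function.Surjective f := by
    rintro ⟨Q, hQ⟩
    obtain ⟨g, hg⟩ := MulAction.exists_smul_eq (N ⋊[φ] P) P₀ Q
    have hm : inr g.right ∈ (P₀ : Subgroup (N ⋊[φ] P)) := ⟨g.right, rfl⟩
    have hfix : (inr g.right : N ⋊[φ] P) • P₀ = P₀ :=
      Sylow.smul_eq_iff_mem_normalizer.mpr (Subgroup.le_normalizer hm)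
    have hg' : (inl g.left : N ⋊[φ] P) • P₀ = Q := by
      conv_rhs => rw [← hg, ← inl_left_mul_inr_right g]
      rw [mul_smul, hfix]
    have hmem : g.left ∈ A := (hmem_smul g.left).mp (by rw [hg']; exact hQ)
    exact ⟨⟨g.left, hmem⟩, Subtype.ext hg'⟩
  -- descend to the quotient
  let f' : A ⧸ B.subgroupOf A → {Q : Sylow p (N ⋊[φ] P) // (inr x : N ⋊[φ] P) ∈ Q} :=
    Quotient.lift f (by
      intro a b h
      have h : ((a : ↥A) : N)⁻¹ * (b : ↥A) ∈ B :=
        Subgroup.mem_subgroupOf.mp (QuotientGroup.leftRel_apply.mp h)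
      refine Subtype.ext ?_
      show (inl (a : N) : N ⋊[φ] P) • P₀ = (inl (b : N) : N ⋊[φ] P) • P₀
      rw [key]
      simpa using (B.inv_mem h))
  have hbij : Function.Bijective f' := by
    constructor
    · intro q₁ q₂
      induction q₁ using Quotient.inductionOn with | h a =>
      induction q₂ using Quotient.inductionOn with | h b =>
      intro h
      have : (inl (a : N) : N ⋊[φ] P) • P₀ = (inl (b : N) : N ⋊[φ] P) • P₀ := congrArg Subtype.val h
      rw [key] at this
      exact Quotient.sound (QuotientGroup.leftRel_apply.mpr
        (Subgroup.mem_subgroupOf.mpr (by simpa using B.inv_mem this)))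
    · intro Q
      obtain ⟨a, ha⟩ := hsurj Q
      exact ⟨QuotientGroup.mk a, ha⟩
  have h1 : Nat.card {Q : Sylow p (N ⋊[φ] P) // (inr x : N ⋊[φ] P) ∈ Q} =
      Nat.card (A ⧸ B.subgroupOf A) := (Nat.card_congr (Equiv.ofBijective f' hbij)).symm
  have h2 : Nat.card {n : N // ∀ y : P, Commute (inl n : N ⋊[φ] P) (inr y)} = Nat.card B :=
    Nat.card_congr (Equiv.subtypeEquivRight fun n =>
      forall_congr' fun y => aux_commute_inl_inr_iff φ n y)
  have h3 : Nat.card {n : N // Commute (inl n : N ⋊[φ] P) (inr x)} = Nat.card A :=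
    Nat.card_congr (Equiv.subtypeEquivRight fun n => aux_commute_inl_inr_iff φ n x)
  have h4 : Nat.card B = Nat.card (B.subgroupOf A) :=
    (Nat.card_congr (Subgroup.subgroupOfEquivOfLe hBA).toEquiv).symm
  rw [h1, h2, h3, h4]
  exact (Subgroup.card_eq_card_quotient_mul_card_subgroup (B.subgroupOf A)).symm
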